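/- In the two-consumer linear-response model with a>0, b>0, and 0 < D̄₁ < D̄₂, if a uniform price p₁ = p₂ = p is charged and both energy fairness (d₁(p)/D̄₁ = d₂(p)/D̄₂), price fairness, and utility fairness (U₁ = U₂) hold simultaneously, then necessarily p ≤ b - a·D̄₂, both provided energies are zero, both utilities are zero, and the aggregator's profit π(d₁(p)+d₂(p)) - p(d₁(p)+d₂(p)) equals zero. -/

import Mathlib

/-- Impossibility of Perfect Fairness: at a uniform price `p`, simultaneous
energy, price and utility fairness force `p ≤ b - a·D̄₂`, zero provided energies, zero
utilities, and zero aggregator profit. -/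
theorem impossibility_of_perfect_fairness
    (a b π p Dbar1 Dbar2 : ℝ) (ha : 0 < a) (hb : 0 < b)
    (hDbar1 : 0 < Dbar1) (hDbar12 : Dbar1 < Dbar2)
    (d1 d2 : ℝ → ℝ)
    (hd1 : ∀ q, d1 q = min Dbar1 (max 0 ((q - b) / a + Dbar1)))
    (hd2 : ∀ q, d2 q = min Dbar2 (max 0 ((q - b) / a + Dbar2)))
    (U1 U2 : ℝ)
    (hU1 : U1 = p * d1 p - ((1/2) * a * (d1 p)^2 + (b - a * Dbar1) * (d1 p)))
    (hU2 : U2 = p * d2 p - ((1/2) * a * (d2 p)^2 + (b - a * Dbar2) * (d2 p)))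
    -- energy fairness at the uniform price
    (hEnergyFair : d1 p / Dbar1 = d2 p / Dbar2)
    -- utility fairness
    (hUtilityFair : U1 = U2) :
    p ≤ b - a * Dbar2 ∧ d1 p = 0 ∧ d2 p = 0 ∧ U1 = 0 ∧ U2 = 0 ∧
    π * (d1 p + d2 p) - p * (d1 p + d2 p) = 0 := by
  set x : ℝ := (p - b) / a with hxdef
  have ha' : a ≠ 0 := ne_of_gt ha
  have hpb : p - b = a * x := by rw [hxdef]; field_simp
  have hDbar2 : 0 < Dbar2 := lt_trans hDbar1 hDbar12
  have h1 : d1 p = min Dbar1 (max 0 (x + Dbar1)) := hd1 p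
  have h2 : d2 p = min Dbar2 (max 0 (x + Dbar2)) := hd2 p
  -- Main claim: x + Dbar2 ≤ 0
  have hkey : x + Dbar2 ≤ 0 := by
    by_contra hc
    push_neg at hc
    rcases le_or_gt 0 x with hx0 | hx0
    · -- both saturated
      have e1 : d1 p = Dbar1 := by
        rw [h1, max_eq_right (by linarith), min_eq_left (by linarith)]
      have e2 : d2 p = Dbar2 := by
        rw [h2, max_eq_right (by linarith), min_eq_left (by linarith)]
      rw [e1] at hU1; rw [e2] at hU2
      have hpb' : 0 ≤ p - b := by nlinarith
      nlinarith [mul_nonneg hpb' (by linarith : (0:ℝ) ≤ Dbar2 - Dbar1),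
        mul_pos ha (mul_pos (by linarith : (0:ℝ) < Dbar2 + Dbar1) (by linarith : (0:ℝ) < Dbar2 - Dbar1))]
    · rcases lt_or_ge 0 (x + Dbar1) with hx1 | hx1
      · -- interior for both
        have e1 : d1 p = x + Dbar1 := by
          rw [h1, max_eq_right (le_of_lt hx1), min_eq_right (by linarith)]
        have e2 : d2 p = x + Dbar2 := by
          rw [h2, max_eq_right (le_of_lt hc), min_eq_right (by linarith)]
        rw [e1, e2] at hEnergyFair
        rw [div_eq_div_iff (ne_of_gt hDbar1) (ne_of_gt hDbar2)] at hEnergyFair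
        have : x * (Dbar2 - Dbar1) = 0 := by nlinarith
        have hx : x = 0 := by
          rcases mul_eq_zero.mp this with h | h
          · exact h
          · linarith
        linarith
      · -- d1 = 0, d2 > 0
        have e1 : d1 p = 0 := by
          rw [h1, max_eq_left hx1, min_eq_right (le_of_lt hDbar1)]
        have e2 : d2 p = x + Dbar2 := by
          rw [h2, max_eq_right (le_of_lt hc), min_eq_right (by linarith)]
        rw [e1, e2] at hEnergyFair
        rw [zero_div] at hEnergyFair
        have : x + Dbar2 = 0 := by
          field_simp at hEnergyFair
          linarith
        linarith
  have e1 : d1 p = 0 := by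
    rw [h1, max_eq_left (by linarith), min_eq_right (le_of_lt hDbar1)]
  have e2 : d2 p = 0 := by
    rw [h2, max_eq_left (by linarith), min_eq_right (le_of_lt hDbar2)]
  have hple : p ≤ b - a * Dbar2 := by nlinarith
  refine ⟨hple, e1, e2, ?_, ?_, ?_⟩
  · rw [hU1, e1]; ring
  · rw [hU2, e2]; ring
  · rw [e1, e2]; ring
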